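/- Biane's map σ ↦ (μ, λ), where μ_i = U if i < σ(i), L if i = σ(i), D if i > σ(i), and for each i with μ_i = D, λ_i = |{j ≥ i : σ(j) ≤ σ(i)}|, is a bijection from involutions in S_n to labeled Motzkin paths of length n, i.e., pairs (μ, λ) of a Motzkin path μ with a label λ_i ∈ {1,...,h_i(μ)} on each down step, where h_i(μ) is the height of the i-th step. -/

import Mathlib

open Finset

/-- Steps of a Motzkin path: up, level, down. -/
inductive Step | U | L | D
deriving DecidableEq

instance instFintypeStep : Fintype Step :=
  ⟨{Step.U, Step.L, Step.D}, by intro x; cases x <;> simp⟩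

/-- `μ` is a Motzkin path: every prefix has at least as many `U`'s as `D`'s, and the
total numbers of `U`'s and `D`'s agree. -/
def IsMotzkin {n : ℕ} (μ : Fin n → Step) : Prop :=
  (∀ k : Fin n, (Finset.univ.filter (fun j => j ≤ k ∧ μ j = Step.D)).card
      ≤ (Finset.univ.filter (fun j => j ≤ k ∧ μ j = Step.U)).card)
  ∧ (Finset.univ.filter (fun j => μ j = Step.U)).card
    = (Finset.univ.filter (fun j => μ j = Step.D)).card

/-- The height of the `i`-th step of `μ`: the larger of the two `y`-coordinates of
the step, i.e. `#{j ≤ i : μ j = U} − #{j < i : μ j = D}`. -/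
def height {n : ℕ} (μ : Fin n → Step) (i : Fin n) : ℕ :=
  (Finset.univ.filter (fun j => j ≤ i ∧ μ j = Step.U)).card
    - (Finset.univ.filter (fun j => j < i ∧ μ j = Step.D)).card

/-- Biane's word of an involution: `U` if `i < σ i`, `L` if `i = σ i`, `D` if `i > σ i`. -/
def bpath {n : ℕ} (σ : Equiv.Perm (Fin n)) (i : Fin n) : Step :=
  if i < σ i then Step.U else if σ i = i then Step.L else Step.D

/-- Biane's label of step `i`: `|{j ≥ i : σ j ≤ σ i}|`. -/
def blabel {n : ℕ} (σ : Equiv.Perm (Fin n)) (i : Fin n) : ℕ :=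
  (Finset.univ.filter (fun j => i ≤ j ∧ σ j ≤ σ i)).card

namespace Biane
variable {n : ℕ}

lemma invo_apply {σ : Equiv.Perm (Fin n)} (hσ : σ * σ = 1) (i : Fin n) : σ (σ i) = i := by
  have := Equiv.ext_iff.mp hσ i
  simpa using this

lemma bpath_eq_U {σ : Equiv.Perm (Fin n)} {i : Fin n} : bpath σ i = Step.U ↔ i < σ i := by
  unfold bpath; split_ifs with h1 h2
  · simp [h1]
  · simp [h1]
  · simp [h1]

lemma bpath_eq_L {σ : Equiv.Perm (Fin n)} {i : Fin n} : bpath σ i = Step.L ↔ σ i = i := by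
  unfold bpath; split_ifs with h1 h2
  · simp [h1.ne']
  · simp [h2]
  · simp [h2]

lemma bpath_eq_D {σ : Equiv.Perm (Fin n)} {i : Fin n} : bpath σ i = Step.D ↔ σ i < i := by
  unfold bpath; split_ifs with h1 h2
  · simp [asymm h1]
  · simp [h2]
  · simp [lt_of_le_of_ne (not_lt.mp h1) h2]

/-- the `r`-th smallest element of `S` (1-indexed), default `d` when out of range. -/
def pick (S : Finset (Fin n)) (r : ℕ) (d : Fin n) : Fin n :=
  if h : r - 1 < S.card then ((S.orderIsoOfFin rfl) ⟨r-1, h⟩ : { x // x ∈ S }) else d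

lemma card_filter_le_orderIso (S : Finset (Fin n)) (t : Fin S.card) :
    (S.filter (fun u => u ≤ ((S.orderIsoOfFin rfl) t : Fin n))).card = (t : ℕ) + 1 := by
  rw [← Fin.card_Iic t]
  refine (card_nbij (fun j : Fin S.card => ((S.orderIsoOfFin rfl) j : Fin n)) ?_ ?_ ?_).symm
  · intro a ha
    simp only [mem_coe, mem_Iic] at ha
    simp only [mem_coe, mem_filter, mem_univ, true_and]
    exact ⟨(S.orderIsoOfFin rfl a).2, by exact_mod_cast (S.orderIsoOfFin rfl).le_iff_le.mpr ha⟩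
  · intro a _ b _ hab
    exact (S.orderIsoOfFin rfl).injective (Subtype.ext hab)
  · intro u hu
    simp only [coe_filter, Set.mem_setOf_eq] at hu
    obtain ⟨huS, hle⟩ := hu
    refine ⟨(S.orderIsoOfFin rfl).symm ⟨u, huS⟩, ?_, ?_⟩
    · simp only [coe_Iic, Set.mem_Iic]
      rw [← (S.orderIsoOfFin rfl).le_iff_le]
      rw [OrderIso.apply_symm_apply]; exact hle
    · simp

lemma pick_mem {S : Finset (Fin n)} {r : ℕ} {d : Fin n} (h : r - 1 < S.card) :
    pick S r d ∈ S := by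
  unfold pick; rw [dif_pos h]; exact ((S.orderIsoOfFin rfl) ⟨r-1, h⟩).2

lemma pick_rank {S : Finset (Fin n)} {r : ℕ} {d : Fin n} (h1 : 1 ≤ r) (h2 : r ≤ S.card) :
    (S.filter (fun u => u ≤ pick S r d)).card = r := by
  have h : r - 1 < S.card := by omega
  unfold pick; rw [dif_pos h, card_filter_le_orderIso S ⟨r-1, h⟩]
  simp; omega

lemma pick_unique {S : Finset (Fin n)} {r : ℕ} {d x : Fin n} (hx : x ∈ S)
    (hr : (S.filter (fun u => u ≤ x)).card = r) : pick S r d = x := by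
  set e := S.orderIsoOfFin rfl with he
  set j := e.symm ⟨x, hx⟩ with hj
  have hex : (e j : Fin n) = x := by simp [hj]
  have hcard : (j : ℕ) + 1 = r := by
    rw [← hr, ← card_filter_le_orderIso S j, hex]
  have h : r - 1 < S.card := by have := j.isLt; omega
  unfold pick; rw [dif_pos h]
  have : (⟨r-1, h⟩ : Fin S.card) = j := by ext; simp; omega
  rw [this, ← he, hex]

section MapsF
variable {σ : Equiv.Perm (Fin n)}

lemma blabel_eq_count (hσ : σ * σ = 1) {i : Fin n} (hi : σ i < i) :
    blabel σ i = (univ.filter (fun u => u < σ u ∧ u ≤ σ i ∧ i ≤ σ u)).card := by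
  unfold blabel
  refine card_nbij (fun j => σ j) ?_ ?_ ?_
  · intro j hj
    simp only [mem_coe, mem_filter, mem_univ, true_and] at hj ⊢
    refine ⟨?_, hj.2, ?_⟩
    · rw [invo_apply hσ]
      exact lt_of_le_of_lt hj.2 (lt_of_lt_of_le hi hj.1)
    · rw [invo_apply hσ]; exact hj.1
  · intro a _ b _ hab; exact σ.injective hab
  · intro u hu
    simp only [coe_filter, Set.mem_setOf_eq] at hu ⊢
    obtain ⟨-, -, h2, h3⟩ := hu
    exact ⟨σ u, ⟨mem_univ _, h3, by rw [invo_apply hσ]; exact h2⟩, invo_apply hσ u⟩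

lemma down_count_eq (hσ : σ * σ = 1) {P : Fin n → Prop} [DecidablePred P] :
    (univ.filter (fun j => P j ∧ σ j < j)).card
      = (univ.filter (fun u => u < σ u ∧ P (σ u))).card := by
  refine card_nbij (fun j => σ j) ?_ ?_ ?_
  · intro j hj
    simp only [mem_coe, mem_filter, mem_univ, true_and] at hj ⊢
    rw [invo_apply hσ]
    exact ⟨hj.2, hj.1⟩
  · intro a _ b _ hab; exact σ.injective hab
  · intro u hu
    simp only [coe_filter, Set.mem_setOf_eq] at hu ⊢
    obtain ⟨-, h2, h3⟩ := hu
    exact ⟨σ u, ⟨mem_univ _, h3, by rw [invo_apply hσ]; exact h2⟩, invo_apply hσ u⟩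

lemma blabel_pos (σ : Equiv.Perm (Fin n)) (i : Fin n) : 1 ≤ blabel σ i :=
  Finset.card_pos.mpr ⟨i, by simp⟩

lemma blabel_le_height (hσ : σ * σ = 1) {i : Fin n} (hD : bpath σ i = Step.D) :
    blabel σ i ≤ height (bpath σ) i := by
  have hi : σ i < i := bpath_eq_D.mp hD
  have hU : (univ.filter (fun j => j ≤ i ∧ bpath σ j = Step.U))
      = univ.filter (fun j => j ≤ i ∧ j < σ j) := by
    apply filter_congr; intro j _; rw [bpath_eq_U]
  have hDset : (univ.filter (fun j => j < i ∧ bpath σ j = Step.D))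
      = univ.filter (fun j => j < i ∧ σ j < j) := by
    apply filter_congr; intro j _; rw [bpath_eq_D]
  unfold height
  rw [hU, hDset, blabel_eq_count hσ hi]
  apply Nat.le_sub_of_add_le
  rw [down_count_eq hσ (P := fun j => j < i)]
  rw [← card_union_of_disjoint]
  · apply card_le_card
    intro u hu
    simp only [mem_union, mem_filter, mem_univ, true_and] at hu ⊢
    rcases hu with ⟨h1, h2, _⟩ | ⟨h1, h2⟩
    · exact ⟨le_trans h2 hi.le, h1⟩
    · exact ⟨(h1.trans h2).le, h1⟩
  · rw [Finset.disjoint_left]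
    intro u hu hu'
    simp only [mem_filter, mem_univ, true_and] at hu hu'
    exact absurd hu'.2 (not_lt.mpr hu.2.2)


lemma isMotzkin_bpath (hσ : σ * σ = 1) : IsMotzkin (bpath σ) := by
  constructor
  · intro k
    have hU : (univ.filter (fun j => j ≤ k ∧ bpath σ j = Step.U))
        = univ.filter (fun j => j ≤ k ∧ j < σ j) := by
      apply filter_congr; intro j _; rw [bpath_eq_U]
    have hD : (univ.filter (fun j => j ≤ k ∧ bpath σ j = Step.D))
        = univ.filter (fun j => j ≤ k ∧ σ j < j) := by
      apply filter_congr; intro j _; rw [bpath_eq_D]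
    rw [hU, hD]
    apply card_le_card_of_injOn σ
    · intro j hj
      simp only [mem_coe, mem_filter, mem_univ, true_and] at hj ⊢
      exact ⟨le_trans hj.2.le hj.1, by rw [invo_apply hσ]; exact hj.2⟩
    · exact fun a _ b _ hab => σ.injective hab
  · have hU : (univ.filter (fun j => bpath σ j = Step.U))
        = univ.filter (fun j => j < σ j) := by
      apply filter_congr; intro j _; rw [bpath_eq_U]
    have hD : (univ.filter (fun j => bpath σ j = Step.D))
        = univ.filter (fun j => σ j < j) := by
      apply filter_congr; intro j _; rw [bpath_eq_D]
    rw [hU, hD]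
    have := down_count_eq hσ (P := fun _ => True)
    simpa using this.symm

end MapsF

section Ginv
variable (μ : Fin n → Step) (lab : Fin n → ℕ)

/-- the set of up steps before `k` still unmatched by `π`. -/
def openSet (π : Equiv.Perm (Fin n)) (k : ℕ) : Finset (Fin n) :=
  univ.filter (fun u => (u : ℕ) < k ∧ μ u = Step.U ∧ π u = u)

/-- the inverse construction: process steps left to right; at a down step match it
with the `lab`-th smallest open up step. -/
def gAux : ℕ → Equiv.Perm (Fin n)
  | 0 => 1
  | (k+1) =>
    if h : k < n then
      if μ ⟨k, h⟩ = Step.D then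
        gAux k * Equiv.swap (pick (openSet μ (gAux k) k) (lab ⟨k, h⟩) ⟨k, h⟩) ⟨k, h⟩
      else gAux k
    else gAux k

variable {μ lab}

lemma gAux_succ_down {k : ℕ} (h : k < n) (hD : μ ⟨k, h⟩ = Step.D) :
    gAux μ lab (k+1) = gAux μ lab k *
      Equiv.swap (pick (openSet μ (gAux μ lab k) k) (lab ⟨k, h⟩) ⟨k, h⟩) ⟨k, h⟩ := by
  rw [gAux, dif_pos h, if_pos hD]

lemma gAux_succ_not_down {k : ℕ} (h : k < n) (hD : μ ⟨k, h⟩ ≠ Step.D) :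
    gAux μ lab (k+1) = gAux μ lab k := by
  rw [gAux, dif_pos h, if_neg hD]

lemma gAux_succ_ge {k : ℕ} (h : ¬ k < n) : gAux μ lab (k+1) = gAux μ lab k := by
  rw [gAux, dif_neg h]

lemma pick_cases (S : Finset (Fin n)) (r : ℕ) (d : Fin n) :
    pick S r d ∈ S ∨ pick S r d = d := by
  unfold pick; split_ifs with h
  · exact Or.inl ((S.orderIsoOfFin rfl ⟨r-1, h⟩).2)
  · exact Or.inr rfl

lemma swap_comm {π : Equiv.Perm (Fin n)} (hπ : π * π = 1) {u i : Fin n}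
    (hu : π u = u) (hi : π i = i) : π * Equiv.swap u i = Equiv.swap u i * π := by
  ext j
  simp only [Equiv.Perm.mul_apply]
  rcases eq_or_ne j u with rfl | hju
  · rw [Equiv.swap_apply_left, hi, hu, Equiv.swap_apply_left]
  rcases eq_or_ne j i with rfl | hji
  · rw [Equiv.swap_apply_right, hu, hi, Equiv.swap_apply_right]
  · rw [Equiv.swap_apply_of_ne_of_ne hju hji, Equiv.swap_apply_of_ne_of_ne]
    · intro h
      exact hju (by have := congrArg π h; rwa [invo_apply hπ, hu] at this)
    · intro h
      exact hji (by have := congrArg π h; rwa [invo_apply hπ, hi] at this)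

lemma gAux_fix_ge : ∀ k, ∀ j : Fin n, k ≤ (j : ℕ) → gAux μ lab k j = j := by
  intro k
  induction k with
  | zero => intro j _; rfl
  | succ k ih =>
    intro j hj
    by_cases h : k < n
    · by_cases hD : μ ⟨k, h⟩ = Step.D
      · rw [gAux_succ_down h hD]
        set u := pick (openSet μ (gAux μ lab k) k) (lab ⟨k, h⟩) ⟨k, h⟩ with hu
        rcases pick_cases (openSet μ (gAux μ lab k) k) (lab ⟨k, h⟩) ⟨k, h⟩ with hmem | hdef
        · have hun : (u : ℕ) < k := by
            rw [hu]; exact ((mem_filter.mp hmem).2).1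
          have hju : j ≠ u := fun e => by omega
          have hji : j ≠ ⟨k, h⟩ := fun e => by
            have : (j : ℕ) = k := by rw [e]
            omega
          rw [Equiv.Perm.mul_apply, Equiv.swap_apply_of_ne_of_ne hju hji]
          exact ih j (by omega)
        · rw [← hu] at hdef
          rw [hdef, Equiv.swap_self]
          simpa using ih j (by omega)
      · rw [gAux_succ_not_down h hD]; exact ih j (by omega)
    · rw [gAux_succ_ge h]; exact ih j (by omega)

lemma gAux_invo : ∀ k, gAux μ lab k * gAux μ lab k = 1 := by
  intro k
  induction k with
  | zero => rfl
  | succ k ih =>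
    by_cases h : k < n
    · by_cases hD : μ ⟨k, h⟩ = Step.D
      · rw [gAux_succ_down h hD]
        set π := gAux μ lab k with hπ
        set u := pick (openSet μ π k) (lab ⟨k, h⟩) ⟨k, h⟩ with hu
        have hik : π ⟨k, h⟩ = ⟨k, h⟩ := gAux_fix_ge k ⟨k, h⟩ (le_refl _)
        have hufix : π u = u := by
          rcases pick_cases (openSet μ π k) (lab ⟨k, h⟩) ⟨k, h⟩ with hmem | hdef
          · exact ((mem_filter.mp hmem).2).2.2
          · rw [← hu] at hdef; rw [hdef]; exact hik
        have hc := swap_comm ih hufix hik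
        calc π * Equiv.swap u ⟨k, h⟩ * (π * Equiv.swap u ⟨k, h⟩)
            = π * (Equiv.swap u ⟨k, h⟩ * π) * Equiv.swap u ⟨k, h⟩ := by
              group
          _ = π * (π * Equiv.swap u ⟨k, h⟩) * Equiv.swap u ⟨k, h⟩ := by rw [← hc]
          _ = (π * π) * (Equiv.swap u ⟨k, h⟩ * Equiv.swap u ⟨k, h⟩) := by group
          _ = 1 := by rw [ih, Equiv.swap_mul_self, one_mul]
      · rw [gAux_succ_not_down h hD]; exact ih
    · rw [gAux_succ_ge h]; exact ih

lemma gAux_stab_succ {k : ℕ} {j : Fin n} (hjk : (j : ℕ) < k)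
    (hne : gAux μ lab k j ≠ j) : gAux μ lab (k+1) j = gAux μ lab k j := by
  by_cases h : k < n
  · by_cases hD : μ ⟨k, h⟩ = Step.D
    · rw [gAux_succ_down h hD]
      set π := gAux μ lab k with hπ
      set u := pick (openSet μ π k) (lab ⟨k, h⟩) ⟨k, h⟩ with hu
      have hji : j ≠ ⟨k, h⟩ := fun e => by
        have : (j : ℕ) = k := by rw [e]
        omega
      have hju : j ≠ u := by
        rcases pick_cases (openSet μ π k) (lab ⟨k, h⟩) ⟨k, h⟩ with hmem | hdef
        · intro e
          exact hne (by rw [e]; exact ((mem_filter.mp hmem).2).2.2)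
        · rw [← hu] at hdef; rw [hdef]; exact hji
      rw [Equiv.Perm.mul_apply, Equiv.swap_apply_of_ne_of_ne hju hji]
    · rw [gAux_succ_not_down h hD]
  · rw [gAux_succ_ge h]

lemma gAux_stab {k m : ℕ} (hkm : k ≤ m) {j : Fin n} (hjk : (j : ℕ) < k)
    (hne : gAux μ lab k j ≠ j) : gAux μ lab m j = gAux μ lab k j := by
  induction m with
  | zero => omega
  | succ m ih =>
    rcases Nat.lt_or_ge k (m+1) with h | h
    · have hm : k ≤ m := by omega
      have := ih hm
      rw [gAux_stab_succ (by omega) (this ▸ hne), this]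
    · have : k = m + 1 := by omega
      rw [this]

end Ginv

section Counting
variable {μ : Fin n → Step}

/-- number of `U` steps among positions `< k`. -/
def Ucnt (μ : Fin n → Step) (k : ℕ) : ℕ :=
  (univ.filter (fun j : Fin n => (j : ℕ) < k ∧ μ j = Step.U)).card

/-- number of `D` steps among positions `< k`. -/
def Dcnt (μ : Fin n → Step) (k : ℕ) : ℕ :=
  (univ.filter (fun j : Fin n => (j : ℕ) < k ∧ μ j = Step.D)).card

lemma cnt_succ_mem {p : Fin n → Prop} [DecidablePred p] {k : ℕ} (h : k < n) (hp : p ⟨k, h⟩) :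
    (univ.filter (fun j : Fin n => (j : ℕ) < k + 1 ∧ p j)).card
      = (univ.filter (fun j : Fin n => (j : ℕ) < k ∧ p j)).card + 1 := by
  have hset : (univ.filter (fun j : Fin n => (j : ℕ) < k + 1 ∧ p j))
      = insert ⟨k, h⟩ (univ.filter (fun j : Fin n => (j : ℕ) < k ∧ p j)) := by
    ext j
    simp only [mem_filter, mem_univ, true_and, mem_insert]
    constructor
    · rintro ⟨h1, h2⟩
      rcases Nat.lt_succ_iff_lt_or_eq.mp h1 with h3 | h3
      · exact Or.inr ⟨h3, h2⟩
      · exact Or.inl (Fin.ext h3)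
    · rintro (rfl | ⟨h1, h2⟩)
      · exact ⟨Nat.lt_succ_self _, hp⟩
      · exact ⟨by omega, h2⟩
  rw [hset, card_insert_of_notMem (by simp)]

lemma cnt_succ_not {p : Fin n → Prop} [DecidablePred p] {k : ℕ} (h : k < n) (hp : ¬ p ⟨k, h⟩) :
    (univ.filter (fun j : Fin n => (j : ℕ) < k + 1 ∧ p j)).card
      = (univ.filter (fun j : Fin n => (j : ℕ) < k ∧ p j)).card := by
  congr 1
  apply filter_congr
  intro j _
  constructor
  · rintro ⟨h1, h2⟩
    rcases Nat.lt_succ_iff_lt_or_eq.mp h1 with h3 | h3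
    · exact ⟨h3, h2⟩
    · exact absurd h2 (by rwa [show j = ⟨k, h⟩ from Fin.ext h3])
  · rintro ⟨h1, h2⟩; exact ⟨by omega, h2⟩

lemma cnt_succ_ge {p : Fin n → Prop} [DecidablePred p] {k : ℕ} (h : ¬ k < n) :
    (univ.filter (fun j : Fin n => (j : ℕ) < k + 1 ∧ p j)).card
      = (univ.filter (fun j : Fin n => (j : ℕ) < k ∧ p j)).card := by
  congr 1
  apply filter_congr
  intro j _
  have := j.isLt
  constructor
  · rintro ⟨h1, h2⟩; exact ⟨by omega, h2⟩
  · rintro ⟨h1, h2⟩; exact ⟨by omega, h2⟩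

lemma cnt_zero {p : Fin n → Prop} [DecidablePred p] :
    (univ.filter (fun j : Fin n => (j : ℕ) < 0 ∧ p j)).card = 0 := by
  simp

lemma Ucnt_succ_of_eq {k : ℕ} (h : k < n) (hp : μ ⟨k, h⟩ = Step.U) :
    Ucnt μ (k+1) = Ucnt μ k + 1 := cnt_succ_mem h hp

lemma Ucnt_succ_of_ne {k : ℕ} (h : k < n) (hp : ¬ μ ⟨k, h⟩ = Step.U) :
    Ucnt μ (k+1) = Ucnt μ k := cnt_succ_not h hp

lemma Ucnt_succ_ge {k : ℕ} (h : ¬ k < n) : Ucnt μ (k+1) = Ucnt μ k := cnt_succ_ge h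

lemma Dcnt_succ_of_eq {k : ℕ} (h : k < n) (hp : μ ⟨k, h⟩ = Step.D) :
    Dcnt μ (k+1) = Dcnt μ k + 1 := cnt_succ_mem h hp

lemma Dcnt_succ_of_ne {k : ℕ} (h : k < n) (hp : ¬ μ ⟨k, h⟩ = Step.D) :
    Dcnt μ (k+1) = Dcnt μ k := cnt_succ_not h hp

lemma Dcnt_succ_ge {k : ℕ} (h : ¬ k < n) : Dcnt μ (k+1) = Dcnt μ k := cnt_succ_ge h

lemma motzkin_total_nat (hM : IsMotzkin μ) : Ucnt μ n = Dcnt μ n := by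
  unfold Ucnt Dcnt
  have h1 : (univ.filter (fun j : Fin n => (j : ℕ) < n ∧ μ j = Step.U))
      = univ.filter (fun j : Fin n => μ j = Step.U) := by
    apply filter_congr; intro j _; simp [j.isLt]
  have h2 : (univ.filter (fun j : Fin n => (j : ℕ) < n ∧ μ j = Step.D))
      = univ.filter (fun j : Fin n => μ j = Step.D) := by
    apply filter_congr; intro j _; simp [j.isLt]
  rw [h1, h2, hM.2]

lemma height_down_eq {i : Fin n} (hD : μ i = Step.D) :
    height μ i = Ucnt μ (i : ℕ) - Dcnt μ (i : ℕ) := by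
  have h1 : (univ.filter (fun j : Fin n => j ≤ i ∧ μ j = Step.U))
      = univ.filter (fun j : Fin n => (j : ℕ) < (i : ℕ) ∧ μ j = Step.U) := by
    apply filter_congr
    intro j _
    constructor
    · rintro ⟨h1, h2⟩
      refine ⟨?_, h2⟩
      rcases eq_or_lt_of_le h1 with h3 | h3
      · rw [h3, hD] at h2; exact absurd h2 (by decide)
      · exact Fin.lt_def.mp h3
    · rintro ⟨h1, h2⟩
      exact ⟨Fin.le_def.mpr (le_of_lt h1), h2⟩
  have h2 : (univ.filter (fun j : Fin n => j < i ∧ μ j = Step.D))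
      = univ.filter (fun j : Fin n => (j : ℕ) < (i : ℕ) ∧ μ j = Step.D) := by
    apply filter_congr
    intro j _
    rw [Fin.lt_def]
  unfold height Ucnt Dcnt
  rw [h1, h2]

end Counting

section Valid
variable {μ : Fin n → Step} {lab : Fin n → ℕ}

/-- The main invariant of the inverse construction. -/
theorem gAux_inv
    (hlab : ∀ i, μ i = Step.D → 1 ≤ lab i ∧ lab i ≤ height μ i) (k : ℕ) :
    (∀ j : Fin n, (j : ℕ) < k →
      (μ j = Step.D → gAux μ lab k j < j ∧ μ (gAux μ lab k j) = Step.U) ∧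
      (μ j = Step.U → gAux μ lab k j = j ∨
        (j < gAux μ lab k j ∧ ((gAux μ lab k j : ℕ) < k) ∧ μ (gAux μ lab k j) = Step.D)) ∧
      (μ j = Step.L → gAux μ lab k j = j))
    ∧ (openSet μ (gAux μ lab k) k).card + Dcnt μ k = Ucnt μ k := by
  induction k with
  | zero =>
    refine ⟨fun j hj => absurd hj (by omega), ?_⟩
    have : openSet μ (gAux μ lab 0) 0 = ∅ := by
      ext u; simp [openSet]
    rw [this]
    simp [Ucnt, Dcnt]
  | succ k ih =>
    by_cases h : k < n
    · set i : Fin n := ⟨k, h⟩ with hidef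
      set π := gAux μ lab k with hπ
      have hπi : π i = i := gAux_fix_ge k i (le_refl _)
      have hival : (i : ℕ) = k := rfl
      rcases hstep : μ i with _ | _ | _
      -- U case
      · have hg : gAux μ lab (k+1) = π := gAux_succ_not_down h (by rw [hstep]; simp)
        constructor
        · intro j hj
          rcases Nat.lt_succ_iff_lt_or_eq.mp hj with hjk | hjk
          · obtain ⟨c1, c2, c3⟩ := (ih.1 j hjk)
            rw [hg]
            exact ⟨c1, fun hu => (c2 hu).imp id (fun ⟨a, b, c⟩ => ⟨a, by omega, c⟩), c3⟩
          · have hji : j = i := Fin.ext hjk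
            subst hji
            rw [hg]
            refine ⟨fun hd => absurd hd (by rw [hstep]; decide), fun _ => Or.inl hπi,
              fun hl => absurd hl (by rw [hstep]; decide)⟩
        · have hO : openSet μ (gAux μ lab (k+1)) (k+1) = insert i (openSet μ π k) := by
            rw [hg]
            ext u
            simp only [openSet, mem_filter, mem_univ, true_and, mem_insert]
            constructor
            · rintro ⟨h1, h2, h3⟩
              rcases Nat.lt_succ_iff_lt_or_eq.mp h1 with h4 | h4
              · exact Or.inr ⟨h4, h2, h3⟩
              · exact Or.inl (Fin.ext (by rw [hival]; exact h4))
            · rintro (rfl | ⟨h1, h2, h3⟩)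
              · exact ⟨Nat.lt_succ_self _, hstep, hπi⟩
              · exact ⟨by omega, h2, h3⟩
          have hnotmem : i ∉ openSet μ π k := by
            simp [openSet, hidef]
          rw [hO, card_insert_of_notMem hnotmem]
          have hU1 : Ucnt μ (k+1) = Ucnt μ k + 1 :=
            Ucnt_succ_of_eq h (by rw [← hidef, hstep])
          have hD1 : Dcnt μ (k+1) = Dcnt μ k :=
            Dcnt_succ_of_ne h (by rw [← hidef, hstep]; decide)
          rw [hU1, hD1]
          omega
      -- L case
      · have hg : gAux μ lab (k+1) = π := gAux_succ_not_down h (by rw [hstep]; simp)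
        constructor
        · intro j hj
          rcases Nat.lt_succ_iff_lt_or_eq.mp hj with hjk | hjk
          · obtain ⟨c1, c2, c3⟩ := (ih.1 j hjk)
            rw [hg]
            exact ⟨c1, fun hu => (c2 hu).imp id (fun ⟨a, b, c⟩ => ⟨a, by omega, c⟩), c3⟩
          · have hji : j = i := Fin.ext hjk
            subst hji
            rw [hg]
            refine ⟨fun hd => absurd hd (by rw [hstep]; decide),
              fun hu => absurd hu (by rw [hstep]; decide), fun _ => hπi⟩
        · have hO : openSet μ (gAux μ lab (k+1)) (k+1) = openSet μ π k := by
            rw [hg]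
            ext u
            simp only [openSet, mem_filter, mem_univ, true_and]
            constructor
            · rintro ⟨h1, h2, h3⟩
              rcases Nat.lt_succ_iff_lt_or_eq.mp h1 with h4 | h4
              · exact ⟨h4, h2, h3⟩
              · rw [Fin.ext (show (u:ℕ) = (i:ℕ) from by rw [hival]; exact h4), hstep] at h2
                exact absurd h2 (by decide)
            · rintro ⟨h1, h2, h3⟩
              exact ⟨by omega, h2, h3⟩
          rw [hO, Ucnt_succ_of_ne h (by rw [← hidef, hstep]; decide),
            Dcnt_succ_of_ne h (by rw [← hidef, hstep]; decide)]
          exact ih.2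
      -- D case
      · have hrange : 1 ≤ lab i ∧ lab i ≤ (openSet μ π k).card := by
          obtain ⟨ha, hb⟩ := hlab i hstep
          rw [height_down_eq hstep] at hb
          have := ih.2
          rw [hival] at hb
          exact ⟨ha, by omega⟩
        set u : Fin n := pick (openSet μ π k) (lab i) i with hu
        have humem : u ∈ openSet μ π k := pick_mem (by omega)
        obtain ⟨-, huk, huU, huπ⟩ := mem_filter.mp humem
        have hune : u ≠ i := by
          intro e
          rw [e] at huk
          simp [hidef] at huk
        have hg : gAux μ lab (k+1) = π * Equiv.swap u i := gAux_succ_down h hstep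
        have hgi : gAux μ lab (k+1) i = u := by
          rw [hg, Equiv.Perm.mul_apply, Equiv.swap_apply_right, huπ]
        have hgu : gAux μ lab (k+1) u = i := by
          rw [hg, Equiv.Perm.mul_apply, Equiv.swap_apply_left, hπi]
        have hgother : ∀ j : Fin n, j ≠ u → j ≠ i → gAux μ lab (k+1) j = π j := by
          intro j h1 h2
          rw [hg, Equiv.Perm.mul_apply, Equiv.swap_apply_of_ne_of_ne h1 h2]
        constructor
        · intro j hj
          rcases eq_or_ne j i with rfl | hji
          · refine ⟨fun _ => ?_, fun hu' => absurd hu' (by rw [hstep]; decide),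
              fun hl => absurd hl (by rw [hstep]; decide)⟩
            rw [hgi]
            exact ⟨Fin.lt_def.mpr (by simpa [hidef] using huk), huU⟩
          rcases eq_or_ne j u with rfl | hju
          · refine ⟨fun hd => absurd hd (by rw [huU]; decide), fun _ => ?_,
              fun hl => absurd hl (by rw [huU]; decide)⟩
            rw [hgu]
            exact Or.inr ⟨Fin.lt_def.mpr (by simpa [hidef] using huk),
              by simp [hidef], hstep⟩
          · have hjk : (j : ℕ) < k := by
              have : (j : ℕ) ≠ k := fun e => hji (Fin.ext e)
              omega
            obtain ⟨c1, c2, c3⟩ := ih.1 j hjk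
            rw [hgother j hju hji]
            exact ⟨c1, fun hu' => (c2 hu').imp id (fun ⟨a, b, c⟩ => ⟨a, by omega, c⟩), c3⟩
        · have hO : openSet μ (gAux μ lab (k+1)) (k+1) = (openSet μ π k).erase u := by
            ext v
            simp only [openSet, mem_filter, mem_univ, true_and, mem_erase]
            constructor
            · rintro ⟨h1, h2, h3⟩
              have hvi : v ≠ i := by
                intro e; rw [e, hstep] at h2; exact absurd h2 (by decide)
              have hvu : v ≠ u := by
                intro e; rw [e, hgu] at h3; exact hune h3.symm
              refine ⟨hvu, ?_, h2, ?_⟩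
              · have : (v : ℕ) ≠ k := fun e => hvi (Fin.ext e)
                omega
              · rw [← hgother v hvu hvi]; exact h3
            · rintro ⟨hvu, h1, h2, h3⟩
              have hvi : v ≠ i := by
                intro e; rw [e] at h1; simp [hidef] at h1
              exact ⟨by omega, h2, by rw [hgother v hvu hvi]; exact h3⟩
          rw [hO, card_erase_of_mem humem,
            Ucnt_succ_of_ne h (by rw [← hidef, hstep]; decide),
            Dcnt_succ_of_eq h (by rw [← hidef]; exact hstep)]
          have := ih.2
          omega
    · have hg : gAux μ lab (k+1) = gAux μ lab k := gAux_succ_ge h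
      constructor
      · intro j hj
        have hjn : (j : ℕ) < n := j.isLt
        have hjk : (j : ℕ) < k := by omega
        obtain ⟨c1, c2, c3⟩ := ih.1 j hjk
        rw [hg]
        exact ⟨c1, fun hu => (c2 hu).imp id (fun ⟨a, b, c⟩ => ⟨a, by omega, c⟩), c3⟩
      · have hO : openSet μ (gAux μ lab (k+1)) (k+1) = openSet μ (gAux μ lab k) k := by
          rw [hg]
          ext v
          simp only [openSet, mem_filter, mem_univ, true_and]
          have := v.isLt
          constructor
          · rintro ⟨h1, h2, h3⟩; exact ⟨by omega, h2, h3⟩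
          · rintro ⟨h1, h2, h3⟩; exact ⟨by omega, h2, h3⟩
        rw [hO, Ucnt_succ_ge h, Dcnt_succ_ge h]
        exact ih.2

variable (hlab : ∀ i, μ i = Step.D → 1 ≤ lab i ∧ lab i ≤ height μ i)

include hlab

/-- at a down step `d`, the construction matches `d` with the `lab d`-th smallest
open up step. -/
lemma down_partner {d : Fin n} (hd : μ d = Step.D) :
    pick (openSet μ (gAux μ lab (d : ℕ)) (d : ℕ)) (lab d) d
        ∈ openSet μ (gAux μ lab (d : ℕ)) (d : ℕ)
      ∧ gAux μ lab n d = pick (openSet μ (gAux μ lab (d : ℕ)) (d : ℕ)) (lab d) d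
      ∧ gAux μ lab n (pick (openSet μ (gAux μ lab (d : ℕ)) (d : ℕ)) (lab d) d) = d := by
  have h : (d : ℕ) < n := d.isLt
  set k := (d : ℕ) with hk
  set π := gAux μ lab k with hπ
  have hrange : 1 ≤ lab d ∧ lab d ≤ (openSet μ π k).card := by
    obtain ⟨ha, hb⟩ := hlab d hd
    rw [height_down_eq hd, ← hk] at hb
    have h2 : (openSet μ π k).card + Dcnt μ k = Ucnt μ k := (gAux_inv hlab k).2
    exact ⟨ha, by omega⟩
  set u : Fin n := pick (openSet μ π k) (lab d) d with hu
  have humem : u ∈ openSet μ π k := pick_mem (by omega)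
  obtain ⟨-, huk, huU, huπ⟩ := mem_filter.mp humem
  have hdeq : (⟨k, h⟩ : Fin n) = d := Fin.ext rfl
  have hπd : π d = d := gAux_fix_ge k d (le_refl _)
  have hg : gAux μ lab (k+1) = π * Equiv.swap u d := by
    rw [gAux_succ_down h (by rw [hdeq]; exact hd), hdeq, ← hπ, ← hu]
  have hgd : gAux μ lab (k+1) d = u := by
    rw [hg, Equiv.Perm.mul_apply, Equiv.swap_apply_right, huπ]
  have hgu : gAux μ lab (k+1) u = d := by
    rw [hg, Equiv.Perm.mul_apply, Equiv.swap_apply_left, hπd]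
  have hune : u ≠ d := fun e => by rw [e] at huk; omega
  refine ⟨humem, ?_, ?_⟩
  · rw [gAux_stab (k := k+1) (by omega) (by omega) (by rw [hgd]; exact hune), hgd]
  · rw [gAux_stab (k := k+1) (by omega) (by omega) (by rw [hgu]; exact Ne.symm hune), hgu]

lemma openSet_final (hM : IsMotzkin μ) : openSet μ (gAux μ lab n) n = ∅ := by
  have h1 := (gAux_inv hlab n).2
  rw [motzkin_total_nat hM] at h1
  exact card_eq_zero.mp (by omega)

lemma up_partner (hM : IsMotzkin μ) {u : Fin n} (hu : μ u = Step.U) :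
    u < gAux μ lab n u ∧ μ (gAux μ lab n u) = Step.D := by
  have := ((gAux_inv hlab n).1 u u.isLt).2.1 hu
  rcases this with h1 | h1
  · exfalso
    have : u ∈ openSet μ (gAux μ lab n) n := by
      simp only [openSet, mem_filter, mem_univ, true_and]
      exact ⟨u.isLt, hu, h1⟩
    rw [openSet_final hlab hM] at this
    exact absurd this (notMem_empty u)
  · exact ⟨h1.1, h1.2.2⟩

lemma bpath_ginv (hM : IsMotzkin μ) : bpath (gAux μ lab n) = μ := by
  funext j
  rcases hj : μ j with h | h | h
  · exact bpath_eq_U.mpr (up_partner hlab hM hj).1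
  · exact bpath_eq_L.mpr (((gAux_inv hlab n).1 j j.isLt).2.2 hj)
  · exact bpath_eq_D.mpr (((gAux_inv hlab n).1 j j.isLt).1 hj).1

/-- an up step `u < k` is open at time `k` iff its final partner is `≥ k`. -/
lemma open_iff (hM : IsMotzkin μ) {k : ℕ} (hkn : k ≤ n) {u : Fin n}
    (hu : μ u = Step.U) (huk : (u : ℕ) < k) :
    gAux μ lab k u = u ↔ k ≤ ((gAux μ lab n u : Fin n) : ℕ) := by
  constructor
  · intro hfix
    by_contra hlt
    push_neg at hlt
    set d : Fin n := gAux μ lab n u with hd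
    obtain ⟨hud, hdD⟩ := up_partner hlab hM hu
    obtain ⟨hpm, hp1, hp2⟩ := down_partner hlab hdD
    -- the partner of d is u
    have hinv : gAux μ lab n d = u := by
      rw [hd]
      exact invo_apply (gAux_invo n) u
    have hup : pick (openSet μ (gAux μ lab (d : ℕ)) (d : ℕ)) (lab d) d = u := by
      rw [← hp1, hinv]
    -- the matching happened at step (d:ℕ)+1 ≤ k
    have hdk : (d : ℕ) + 1 ≤ k := by omega
    have hgu : gAux μ lab ((d : ℕ)+1) u = d := by
      have h : (d : ℕ) < n := d.isLt
      have hdeq : (⟨(d : ℕ), h⟩ : Fin n) = d := Fin.ext rfl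
      have hπd : gAux μ lab (d : ℕ) d = d := gAux_fix_ge _ d (le_refl _)
      have hg : gAux μ lab ((d : ℕ)+1)
          = gAux μ lab (d : ℕ) * Equiv.swap u d := by
        rw [gAux_succ_down h (by rw [hdeq]; exact hdD), hdeq, hup]
      rw [hg, Equiv.Perm.mul_apply, Equiv.swap_apply_left, hπd]
    have hune : u ≠ d := (Fin.lt_def.mp hud).ne ∘ congrArg Fin.val
    have : gAux μ lab k u = d := by
      rw [gAux_stab hdk (by omega) (by rw [hgu]; exact Ne.symm hune), hgu]
    rw [hfix] at this
    exact hune this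
  · intro hge
    by_contra hne
    have hstab : gAux μ lab n u = gAux μ lab k u := gAux_stab hkn huk hne
    have := ((gAux_inv hlab k).1 u huk).2.1 hu
    rcases this with h1 | h1
    · exact hne h1
    · rw [hstab] at hge; omega

lemma mem_openSet_iff (hM : IsMotzkin μ) {k : ℕ} (hkn : k ≤ n) {u : Fin n} :
    u ∈ openSet μ (gAux μ lab k) k
      ↔ (u : ℕ) < k ∧ μ u = Step.U ∧ k ≤ ((gAux μ lab n u : Fin n) : ℕ) := by
  simp only [openSet, mem_filter, mem_univ, true_and]
  constructor
  · rintro ⟨h1, h2, h3⟩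
    exact ⟨h1, h2, (open_iff hlab hM hkn h2 h1).mp h3⟩
  · rintro ⟨h1, h2, h3⟩
    exact ⟨h1, h2, (open_iff hlab hM hkn h2 h1).mpr h3⟩

lemma blabel_ginv (hM : IsMotzkin μ) {d : Fin n} (hd : μ d = Step.D) :
    blabel (gAux μ lab n) d = lab d := by
  set σ := gAux μ lab n with hσdef
  have hσinvo : σ * σ = 1 := gAux_invo n
  obtain ⟨hpm, hp1, hp2⟩ := down_partner hlab hd
  set k := (d : ℕ) with hk
  set u : Fin n := pick (openSet μ (gAux μ lab k) k) (lab d) d with hu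
  obtain ⟨-, huk, huU, -⟩ := mem_filter.mp hpm
  have hσd : σ d < d := by
    have h5 : σ d = u := hp1
    rw [h5, Fin.lt_def]
    omega
  rw [blabel_eq_count hσinvo hσd]
  have hrange : 1 ≤ lab d ∧ lab d ≤ (openSet μ (gAux μ lab k) k).card := by
    obtain ⟨ha, hb⟩ := hlab d hd
    rw [height_down_eq hd, ← hk] at hb
    have h2 : (openSet μ (gAux μ lab k) k).card + Dcnt μ k = Ucnt μ k := (gAux_inv hlab k).2
    exact ⟨ha, by omega⟩
  have hσdu : σ d = u := hp1
  have hset : (univ.filter (fun v => v < σ v ∧ v ≤ σ d ∧ d ≤ σ v))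
      = (openSet μ (gAux μ lab k) k).filter (fun v => v ≤ u) := by
    ext v
    simp only [mem_filter, mem_univ, true_and]
    rw [mem_openSet_iff hlab hM (by omega)]
    constructor
    · rintro ⟨h1, h2, h3⟩
      have hvU : μ v = Step.U := by
        rw [← bpath_ginv hlab hM]
        exact bpath_eq_U.mpr h1
      refine ⟨⟨?_, hvU, ?_⟩, by rwa [hσdu] at h2⟩
      · have : (v : ℕ) ≤ (σ d : ℕ) := Fin.le_def.mp h2
        omega
      · exact Fin.le_def.mp h3
    · rintro ⟨⟨h1, h2, h3⟩, h4⟩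
      have hvU : v < σ v := by
        rw [← bpath_eq_U (σ := σ), bpath_ginv hlab hM]
        exact h2
      exact ⟨hvU, by rwa [hσdu], Fin.le_def.mpr h3⟩
  rw [hset, hu]
  exact pick_rank hrange.1 hrange.2

end Valid

section LeftInv
variable {σ0 : Equiv.Perm (Fin n)}

theorem gAux_of_invo (hσ : σ0 * σ0 = 1) (k : ℕ) : ∀ j : Fin n,
    gAux (bpath σ0) (fun i => if bpath σ0 i = Step.D then blabel σ0 i else 0) k j
      = if (j : ℕ) < k ∧ ((σ0 j : Fin n) : ℕ) < k then σ0 j else j := by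
  set μ := bpath σ0 with hμ
  set lab := fun i => if bpath σ0 i = Step.D then blabel σ0 i else 0 with hlabdef
  induction k with
  | zero =>
    intro j
    rw [if_neg (by omega)]
    rfl
  | succ k ih =>
    by_cases h : k < n
    · set i : Fin n := ⟨k, h⟩ with hi
      have hival : (i : ℕ) = k := rfl
      have hki : ∀ j : Fin n, (j : ℕ) = k → j = i := fun j e => Fin.ext (by rw [e, hival])
      rcases hstep : μ i with _ | _ | _
      -- U case
      · have hg : gAux μ lab (k+1) = gAux μ lab k :=
          gAux_succ_not_down h (by rw [← hi, hstep]; decide)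
        have hσi : i < σ0 i := bpath_eq_U.mp (by rw [← hμ]; exact hstep)
        intro j
        rw [hg, ih j]
        rcases eq_or_ne j i with rfl | hji
        · have h1 : k < (σ0 i : ℕ) := by
            have := Fin.lt_def.mp hσi
            omega
          rw [if_neg (by omega), if_neg (by omega)]
        · have hj1 : (j : ℕ) ≠ k := fun e => hji (hki j e)
          have hj2 : (σ0 j : ℕ) = k → k < (j : ℕ) := by
            intro e
            have h1 : σ0 j = i := hki _ e
            have h2 : j = σ0 i := by rw [← h1, invo_apply hσ]
            rw [h2, ← hival]
            exact Fin.lt_def.mp hσi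
          by_cases hc : (j : ℕ) < k ∧ (σ0 j : ℕ) < k
          · rw [if_pos hc, if_pos (by omega)]
          · rw [if_neg hc, if_neg (by
              rintro ⟨a, b⟩
              rcases Nat.lt_succ_iff_lt_or_eq.mp b with b' | b'
              · exact hc ⟨by omega, b'⟩
              · have := hj2 b'; omega)]
      -- L case
      · have hg : gAux μ lab (k+1) = gAux μ lab k :=
          gAux_succ_not_down h (by rw [← hi, hstep]; decide)
        have hσi : σ0 i = i := bpath_eq_L.mp (by rw [← hμ]; exact hstep)
        intro j
        rw [hg, ih j]
        rcases eq_or_ne j i with rfl | hji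
        · rw [if_neg (by omega), if_pos ⟨by omega, by rw [hσi]; omega⟩, hσi]
        · have hj1 : (j : ℕ) ≠ k := fun e => hji (hki j e)
          have hj2 : (σ0 j : ℕ) ≠ k := by
            intro e
            have h1 : σ0 j = i := hki _ e
            have h2 : j = σ0 i := by rw [← h1, invo_apply hσ]
            rw [hσi] at h2
            exact hji h2
          by_cases hc : (j : ℕ) < k ∧ (σ0 j : ℕ) < k
          · rw [if_pos hc, if_pos (by omega)]
          · rw [if_neg hc, if_neg (by rintro ⟨a, b⟩; exact hc ⟨by omega, by omega⟩)]
      -- D case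
      · have hσi : σ0 i < i := bpath_eq_D.mp (by rw [← hμ]; exact hstep)
        have hσiv : (σ0 i : ℕ) < k := by
          have := Fin.lt_def.mp hσi
          omega
        have hOk : ∀ v : Fin n, v ∈ openSet μ (gAux μ lab k) k
            ↔ ((v : ℕ) < k ∧ μ v = Step.U ∧ k ≤ (σ0 v : ℕ)) := by
          intro v
          simp only [openSet, mem_filter, mem_univ, true_and]
          constructor
          · rintro ⟨h1, h2, h3⟩
            refine ⟨h1, h2, ?_⟩
            rw [ih v] at h3
            have hvU : v < σ0 v := bpath_eq_U.mp (by rw [← hμ]; exact h2)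
            by_contra hcon
            push_neg at hcon
            rw [if_pos ⟨h1, hcon⟩] at h3
            exact absurd h3 hvU.ne'
          · rintro ⟨h1, h2, h3⟩
            exact ⟨h1, h2, by rw [ih v, if_neg (by omega)]⟩
        have hmemx : σ0 i ∈ openSet μ (gAux μ lab k) k := by
          rw [hOk]
          refine ⟨hσiv, ?_, ?_⟩
          · rw [hμ]
            apply bpath_eq_U.mpr
            rw [invo_apply hσ]
            exact hσi
          · rw [invo_apply hσ, hival]
        have hrank : ((openSet μ (gAux μ lab k) k).filter (fun v => v ≤ σ0 i)).card
            = blabel σ0 i := by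
          rw [blabel_eq_count hσ hσi]
          congr 1
          ext v
          simp only [mem_filter, mem_univ, true_and]
          rw [hOk]
          constructor
          · rintro ⟨⟨h1, h2, h3⟩, h4⟩
            exact ⟨bpath_eq_U.mp (by rw [← hμ]; exact h2), h4,
              Fin.le_def.mpr (by rw [hival]; exact h3)⟩
          · rintro ⟨h1, h2, h3⟩
            have hv : (v : ℕ) ≤ (σ0 i : ℕ) := Fin.le_def.mp h2
            refine ⟨⟨by omega, by rw [hμ]; exact bpath_eq_U.mpr h1, ?_⟩, h2⟩
            rw [← hival]
            exact Fin.le_def.mp h3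
        have hpick : pick (openSet μ (gAux μ lab k) k) (lab i) i = σ0 i := by
          apply pick_unique hmemx
          rw [hrank, hlabdef]
          simp only [← hμ, hstep, if_pos]
        have hg : gAux μ lab (k+1) = gAux μ lab k * Equiv.swap (σ0 i) i := by
          rw [gAux_succ_down h (by rw [← hi]; exact hstep), ← hi, hpick]
        intro j
        rw [hg, Equiv.Perm.mul_apply]
        rcases eq_or_ne j i with rfl | hji
        · rw [Equiv.swap_apply_right, ih (σ0 i), if_neg (by rw [invo_apply hσ]; omega),
            if_pos ⟨by omega, by omega⟩]
        rcases eq_or_ne j (σ0 i) with rfl | hjsi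
        · rw [Equiv.swap_apply_left, ih i, if_neg (by omega),
            if_pos ⟨by omega, by rw [invo_apply hσ]; omega⟩, invo_apply hσ]
        · rw [Equiv.swap_apply_of_ne_of_ne hjsi hji, ih j]
          have hj1 : (j : ℕ) ≠ k := fun e => hji (hki j e)
          have hj2 : (σ0 j : ℕ) ≠ k := by
            intro e
            have h1 : σ0 j = i := hki _ e
            have h2 : j = σ0 i := by rw [← h1, invo_apply hσ]
            exact hjsi h2
          by_cases hc : (j : ℕ) < k ∧ (σ0 j : ℕ) < k
          · rw [if_pos hc, if_pos (by omega)]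
          · rw [if_neg hc, if_neg (by rintro ⟨a, b⟩; exact hc ⟨by omega, by omega⟩)]
    · have hg : gAux μ lab (k+1) = gAux μ lab k := gAux_succ_ge h
      intro j
      have h1 : (j : ℕ) < n := j.isLt
      have h2 : ((σ0 j : Fin n) : ℕ) < n := (σ0 j).isLt
      rw [hg, ih j, if_pos ⟨by omega, by omega⟩, if_pos ⟨by omega, by omega⟩]

end LeftInv
end Biane

/-- Biane's map `σ ↦ (μ, λ)` is a bijection from involutions in `S_n` onto labeled
Motzkin paths of length `n`: pairs of a Motzkin path together with a label
`λ i ∈ {1, …, h_i(μ)}` on every down step (and, as a normalization, label `0`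
elsewhere). -/
theorem biane_bijective (n : ℕ) :
    Set.BijOn
      (fun σ : Equiv.Perm (Fin n) =>
        (bpath σ, fun i => if bpath σ i = Step.D then blabel σ i else 0))
      {σ | σ * σ = 1}
      {p : (Fin n → Step) × (Fin n → ℕ) |
        IsMotzkin p.1
        ∧ (∀ i, p.1 i = Step.D → 1 ≤ p.2 i ∧ p.2 i ≤ height p.1 i)
        ∧ (∀ i, p.1 i ≠ Step.D → p.2 i = 0)} := by
  have mapsF : Set.MapsTo
      (fun σ : Equiv.Perm (Fin n) =>
        (bpath σ, fun i => if bpath σ i = Step.D then blabel σ i else 0))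
      {σ | σ * σ = 1}
      {p : (Fin n → Step) × (Fin n → ℕ) |
        IsMotzkin p.1
        ∧ (∀ i, p.1 i = Step.D → 1 ≤ p.2 i ∧ p.2 i ≤ height p.1 i)
        ∧ (∀ i, p.1 i ≠ Step.D → p.2 i = 0)} := by
    intro σ hσ
    refine ⟨Biane.isMotzkin_bpath hσ, fun i hD => ?_, fun i hnD => if_neg hnD⟩
    simp only [if_pos hD]
    exact ⟨Biane.blabel_pos σ i, Biane.blabel_le_height hσ hD⟩
  have mapsG : Set.MapsTo
      (fun p : (Fin n → Step) × (Fin n → ℕ) => Biane.gAux p.1 p.2 n)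
      {p : (Fin n → Step) × (Fin n → ℕ) |
        IsMotzkin p.1
        ∧ (∀ i, p.1 i = Step.D → 1 ≤ p.2 i ∧ p.2 i ≤ height p.1 i)
        ∧ (∀ i, p.1 i ≠ Step.D → p.2 i = 0)}
      {σ | σ * σ = 1} :=
    fun _ _ => Biane.gAux_invo n
  refine Set.InvOn.bijOn ⟨?_, ?_⟩ mapsF mapsG
  · intro σ hσ
    apply Equiv.ext
    intro j
    have h := Biane.gAux_of_invo hσ n j
    simp only at h ⊢
    rw [h, if_pos ⟨j.isLt, (σ j).isLt⟩]
  · rintro ⟨μ, lab⟩ ⟨hM, hlab, hzero⟩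
    simp only at hlab hzero ⊢
    have hb := Biane.bpath_ginv hlab hM
    rw [Prod.mk.injEq]
    refine ⟨hb, funext fun i => ?_⟩
    rw [hb]
    by_cases hD : μ i = Step.D
    · rw [if_pos hD]
      exact Biane.blabel_ginv hlab hM hD
    · rw [if_neg hD]
      exact (hzero i hD).symm
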